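/- Let n > 1 be an integer and let A, B be integers with 2^(n-1) ≤ A < 2^n and 2^(n-1) ≤ B < 2^n, and let p, q be integers. Then there do not exist an integer m ≥ n, an integer C with 2^(m-1) < C < 2^m, and an integer r such that ((A / 2^(n-1)) · 2^p) / ((B / 2^(n-1)) · 2^q) = (C / 2^(m-1) + 1 / 2^m) · 2^r. In other words, the exact quotient of two precision-n floating-point numbers is never a midpoint between two consecutive precision-m floating-point numbers for any m ≥ n. -/

import Mathlib

/-- The exact quotient of two precision-`n` floating-point numbers
`(A / 2^(n-1)) · 2^p` and `(B / 2^(n-1)) · 2^q` is never a midpoint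
`(C / 2^(m-1) + 1 / 2^m) · 2^r` between two consecutive precision-`m`
floating-point numbers, for any `m ≥ n`. -/
theorem division_not_midpoint (n : ℕ) (hn : 1 < n) (A B : ℤ)
    (hA1 : 2 ^ (n - 1) ≤ A) (hA2 : A < 2 ^ n)
    (hB1 : 2 ^ (n - 1) ≤ B) (hB2 : B < 2 ^ n) (p q : ℤ) :
    ¬ ∃ (m : ℕ) (C : ℤ) (r : ℤ), n ≤ m ∧ 2 ^ (m - 1) < C ∧ C < 2 ^ m ∧
      ((A : ℝ) / 2 ^ (n - 1) * (2 : ℝ) ^ p) / ((B : ℝ) / 2 ^ (n - 1) * (2 : ℝ) ^ q)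
        = ((C : ℝ) / 2 ^ (m - 1) + 1 / 2 ^ m) * (2 : ℝ) ^ r := by
  rintro ⟨m, C, r, hnm, hC1, hC2, heq⟩
  have hm1 : 1 ≤ m := le_trans hn.le hnm
  have hBpos : (0:ℤ) < B := lt_of_lt_of_le (by positivity) hB1
  have hApos : (0:ℤ) < A := lt_of_lt_of_le (by positivity) hA1
  have hBR : (0:ℝ) < (B:ℝ) := by exact_mod_cast hBpos
  have h2 : (2:ℝ) ≠ 0 := two_ne_zero
  have hmm : (2:ℝ)^m = 2 * 2^(m-1) := by
    rw [← pow_succ']; congr 1; omega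
  have hnn : (2:ℝ)^(n-1) ≠ 0 := by positivity
  set t : ℤ := r + q - p - (m:ℤ) with ht
  -- rewrite both sides
  have e1 : ((A : ℝ) / 2 ^ (n - 1) * (2 : ℝ) ^ p) / ((B : ℝ) / 2 ^ (n - 1) * (2 : ℝ) ^ q)
      = (A:ℝ) * (2:ℝ)^p / ((B:ℝ) * (2:ℝ)^q) := by
    field_simp
  have e2 : ((C : ℝ) / 2 ^ (m - 1) + 1 / 2 ^ m) * (2 : ℝ) ^ r
      = (2*(C:ℝ)+1) * (2:ℝ)^r / (2:ℝ)^m := by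
    rw [hmm]
    have : (2:ℝ)^(m-1) ≠ 0 := by positivity
    field_simp
  rw [e1, e2] at heq
  have hq : (2:ℝ)^q ≠ 0 := zpow_ne_zero q h2
  have hp : (2:ℝ)^p ≠ 0 := zpow_ne_zero p h2
  have hmne : (2:ℝ)^m ≠ 0 := by positivity
  rw [div_eq_div_iff (by positivity) (by positivity)] at heq
  -- heq : A * 2^p * 2^m = (2C+1) * 2^r * (B * 2^q)
  have hkey : (A:ℝ) = (B:ℝ) * (2*(C:ℝ)+1) * (2:ℝ)^t := by
    have hzm : (2:ℝ)^m = (2:ℝ)^((m:ℤ)) := (zpow_natCast 2 m).symm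
    rw [hzm] at heq
    have h3 : (A:ℝ) * ((2:ℝ)^p * (2:ℝ)^((m:ℤ)))
        = (B:ℝ) * (2*(C:ℝ)+1) * ((2:ℝ)^r * (2:ℝ)^q) := by
      linarith [heq]
    rw [← zpow_add₀ h2, ← zpow_add₀ h2] at h3
    have h4 : (2:ℝ)^(r+q) = (2:ℝ)^t * (2:ℝ)^(p+(m:ℤ)) := by
      rw [← zpow_add₀ h2]; congr 1; omega
    rw [h4, ← mul_assoc] at h3
    have h5 : (2:ℝ)^(p+(m:ℤ)) ≠ 0 := zpow_ne_zero _ h2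
    exact mul_right_cancel₀ h5 h3
  -- pass to integers
  have hexp : (2:ℝ)^t * (2:ℝ)^(((-t).toNat:ℤ)) = (2:ℝ)^((t.toNat:ℤ)) := by
    rw [← zpow_add₀ h2]; congr 1; omega
  have keyR : (A:ℝ) * (2:ℝ)^((-t).toNat) = (B:ℝ) * (2*(C:ℝ)+1) * (2:ℝ)^(t.toNat) := by
    rw [hkey, mul_assoc, ← zpow_natCast (2:ℝ) ((-t).toNat), hexp, zpow_natCast]
  have keyZ : A * 2^((-t).toNat) = B * (2*C+1) * 2^(t.toNat) := by
    exact_mod_cast keyR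
  -- integer facts
  have h2m : (2:ℤ)^m < 2*C+1 := by
    have : (2:ℤ)^m = 2 * 2^(m-1) := by rw [← pow_succ']; congr 1; omega
    omega
  have hnm2 : (2:ℤ)^n ≤ 2^m := pow_le_pow_right₀ one_le_two hnm
  have hn2 : (2:ℤ)^n = 2 * 2^(n-1) := by rw [← pow_succ']; congr 1; omega
  rcases le_or_gt 0 t with htpos | htneg
  · -- t ≥ 0 : A = B (2C+1) 2^(t.toNat), too big
    have h0 : (-t).toNat = 0 := by omega
    rw [h0, pow_zero, mul_one] at keyZ
    have h1 : (1:ℤ) ≤ 2^(t.toNat) := one_le_pow₀ one_le_two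
    have l1 : 2^(n-1) * (2^n + 1) ≤ B * (2*C+1) :=
      mul_le_mul hB1 (by omega) (by positivity) hBpos.le
    have hCpos : (0:ℤ) < C := lt_of_le_of_lt (by positivity) hC1
    have l2 : B*(2*C+1) ≤ B*(2*C+1)*2^(t.toNat) :=
      le_mul_of_one_le_right (mul_nonneg hBpos.le (by linarith)) h1
    have l3 : (2:ℤ) ≤ 2^(n-1) := by
      calc (2:ℤ) = 2^1 := (pow_one 2).symm
      _ ≤ 2^(n-1) := pow_le_pow_right₀ one_le_two (by omega)
    nlinarith [keyZ, l1, l2, l3, hn2, hA2]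
  · -- t < 0 : A 2^a = B (2C+1), so 2^a ∣ B
    have h0 : t.toNat = 0 := by omega
    rw [h0, pow_zero, mul_one] at keyZ
    have hdvd : (2:ℤ)^((-t).toNat) ∣ B * (2*C+1) := ⟨A, by linarith [keyZ]⟩
    have hcop : IsCoprime ((2:ℤ)^((-t).toNat)) (2*C+1) :=
      IsCoprime.pow_left ⟨-C, 1, by ring⟩
    have hdvdB : (2:ℤ)^((-t).toNat) ∣ B := hcop.dvd_of_dvd_mul_right hdvd
    obtain ⟨B', hB'⟩ := hdvdB
    have hpow : (0:ℤ) < 2^((-t).toNat) := by positivity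
    have hB'pos : 0 < B' := by
      by_contra h
      push_neg at h
      nlinarith
    have hAeq : A = B' * (2*C+1) := by
      have h6 : 2^((-t).toNat) * A = 2^((-t).toNat) * (B' * (2*C+1)) := by
        rw [hB'] at keyZ; linear_combination keyZ
      exact mul_left_cancel₀ (ne_of_gt hpow) h6
    have l4 : 2*C+1 ≤ B'*(2*C+1) := le_mul_of_one_le_left (by omega) hB'pos
    linarith [hAeq, l4, h2m, hnm2, hA2]
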